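/- Under the SETUP and the ALGORITHM, the accumulated weighted gradient energy is summable: Σ_{k=0}^∞ ⟨x^k, (H_{G^k} ⊗ I_d) x^k⟩ ≤ (D(w^0) − D*)/ρ < ∞, and consequently lim_{k→∞} max_{{i,j}∈E^k} ‖x_i^k − x_j^k‖ = 0. -/

import Mathlib

noncomputable section

open scoped BigOperators

abbrev Evec (d : ℕ) := EuclideanSpace ℝ (Fin d)
abbrev ENvec (n d : ℕ) := PiLp 2 (fun _ : Fin n => EuclideanSpace ℝ (Fin d))

/-- Real inner product on `ℝ^d`. -/
def ip {d : ℕ} (x y : Evec d) : ℝ := inner ℝ x y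

/-- Real inner product on `ℝ^{nd}`. -/
def ipN {n d : ℕ} (x y : ENvec n d) : ℝ := inner ℝ x y

/-- `g` is a subgradient of `f` at `x`. -/
def IsSubgradientAt {d : ℕ} (f : Evec d → ℝ) (g x : Evec d) : Prop :=
  ∀ y, f x + ip g (y - x) ≤ f y

/-- `f` is strongly convex on `X` with parameter `θ`. -/
def StrongConvexOnWith {d : ℕ} (X : Set (Evec d)) (θ : ℝ) (f : Evec d → ℝ) : Prop :=
  ∀ x ∈ X, ∀ y ∈ X, ∀ g, IsSubgradientAt f g x →
    θ / 2 * ‖y - x‖ ^ 2 ≤ f y - f x - ip g (y - x)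

structure Setup (n d : ℕ) : Type where
  hn : 2 ≤ n
  hd : 1 ≤ d
  X : Fin n → Set (Evec d)
  f : Fin n → Evec d → ℝ
  θ : Fin n → ℝ
  hθ : ∀ i, 0 < θ i
  hXne : ∀ i, (X i).Nonempty
  hXclosed : ∀ i, IsClosed (X i)
  hXconv : ∀ i, Convex ℝ (X i)
  hfconv : ∀ i, ConvexOn ℝ Set.univ (f i)
  hstrong : ∀ i, StrongConvexOnWith (X i) (θ i) (f i)
  hzero : (0 : Evec d) ∈ interior (⋂ i, X i)
  xt : Fin n → Evec d → Evec d
  hxt_mem : ∀ i w, xt i w ∈ X i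
  hxt_max : ∀ i w, ∀ x ∈ X i, ip w x - f i x ≤ ip w (xt i w) - f i (xt i w)
  hxt_uniq : ∀ i w x, x ∈ X i →
    ip w x - f i x = ip w (xt i w) - f i (xt i w) → x = xt i w
  xstar : Evec d
  hxstar_mem : xstar ∈ ⋂ i, X i
  hxstar_min : ∀ x ∈ ⋂ i, X i, (∑ i, f i xstar) ≤ ∑ i, f i x

namespace Setup

variable {n d : ℕ} (P : Setup n d)

/-- Lipschitz constants `L_i = 1/θ_i`. -/
def Lip (i : Fin n) : ℝ := 1 / P.θ i

/-- `L = max_i L_i`. -/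
def Lmax : ℝ := ⨆ i, P.Lip i

/-- The conjugate function `d_i`. -/
def dconj (i : Fin n) (w : Evec d) : ℝ := ip w (P.xt i w) - P.f i (P.xt i w)

/-- The Fenchel dual function `D`. -/
def D (w : ENvec n d) : ℝ := ∑ i, P.dconj i (w i)

/-- The map `x̃ = ∇D`. -/
def xtv (w : ENvec n d) : ENvec n d := WithLp.toLp 2 (fun i => P.xt i (w i))

/-- The primal objective `F`. -/
def Fobj (x : ENvec n d) : ℝ := ∑ i, P.f i (x i)

/-- The optimal primal value. -/
def Fstar : ℝ := ∑ i, P.f i P.xstar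

/-- The primal optimum `𝐱* = (x*, …, x*)`. -/
def xstarv : ENvec n d := WithLp.toLp 2 (fun _ => P.xstar)

end Setup

/-- The subspace `S^⊥ = {w : w_1 + ⋯ + w_n = 0}`. -/
def Sperp (n d : ℕ) : Submodule ℝ (ENvec n d) where
  carrier := {w | ∑ i, w i = 0}
  add_mem' := by
    intro a b ha hb
    simp only [Set.mem_setOf_eq] at ha hb ⊢
    calc ∑ i, (a + b) i = ∑ i, (a i + b i) := rfl
    _ = (∑ i, a i) + ∑ i, b i := Finset.sum_add_distrib
    _ = 0 := by rw [ha, hb, add_zero]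
  zero_mem' := by
    simp only [Set.mem_setOf_eq]
    calc ∑ i, (0 : ENvec n d) i = ∑ _i : Fin n, (0 : Evec d) := rfl
    _ = 0 := by simp
  smul_mem' := by
    intro c a ha
    simp only [Set.mem_setOf_eq] at ha ⊢
    calc ∑ i, (c • a) i = ∑ i, c • a i := rfl
    _ = c • ∑ i, a i := Finset.smul_sum.symm
    _ = 0 := by rw [ha, smul_zero]

/-- Orthogonal projection onto `S^⊥`. -/
def projSperp {n d : ℕ} (x : ENvec n d) : ENvec n d :=
  ((Sperp n d).orthogonalProjectionOnto x : ENvec n d)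

namespace Setup

variable {n d : ℕ} (P : Setup n d)

/-- The optimal dual value `D* = min_{w ∈ S^⊥} D(w)`. -/
def Dstar : ℝ := sInf (P.D '' (Sperp n d : Set (ENvec n d)))

end Setup

/-- Block action of `H ⊗ I_d` on `ℝ^{nd}`. -/
def blockMul {n d : ℕ} (H : Matrix (Fin n) (Fin n) ℝ) (w : ENvec n d) : ENvec n d :=
  WithLp.toLp 2 (fun i => ∑ j, H i j • w j)

/-- A time-varying sequence of weighted undirected graphs. -/
structure GraphSeq (n : ℕ) : Type where
  adj : ℕ → Fin n → Fin n → Bool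
  adj_symm : ∀ k i j, adj k i j = adj k j i
  adj_irrefl : ∀ k i, adj k i i = false
  adj_ne : ∀ k, ∃ i j, adj k i j = true
  h : ℕ → Fin n → Fin n → ℝ
  h_symm : ∀ k i j, h k i j = h k j i
  hlow : ℝ
  hhigh : ℝ
  hlow_pos : 0 < hlow
  h_mem : ∀ k i j, adj k i j = true → h k i j ∈ Set.Icc hlow hhigh

namespace GraphSeq

variable {n : ℕ} (Gs : GraphSeq n)

/-- The weight matrix `H_{G^k}`. -/
def H (k : ℕ) : Matrix (Fin n) (Fin n) ℝ :=
  Matrix.of fun i j =>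
    if i = j then ∑ l, (if Gs.adj k i l = true then Gs.h k i l else 0)
    else if Gs.adj k i j = true then -(Gs.h k i j) else 0

end GraphSeq

/-- The Fenchel dual gradient algorithm: step sizes, iterates, and their defining relations. -/
structure Algo (n d : ℕ) (P : Setup n d) (Gs : GraphSeq n) : Type where
  δ : ℝ
  hδ_pos : 0 < δ
  hδ : ∀ k, (δ • Matrix.diagonal (fun i => (P.Lip i)⁻¹) - Gs.H k).PosSemidef
  αlo : ℝ
  αhi : ℝ
  hαlo : 0 < αlo
  hαhi : αhi < 2 / δ
  α : ℕ → ℝ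
  hα : ∀ k, α k ∈ Set.Icc αlo αhi
  w : ℕ → ENvec n d
  hw0 : w 0 ∈ Sperp n d
  hrec : ∀ k, w (k + 1) = w k - α k • blockMul (Gs.H k) (P.xtv (w k))

namespace Algo

variable {n d : ℕ} {P : Setup n d} {Gs : GraphSeq n} (A : Algo n d P Gs)

/-- Primal iterates `x^k = ∇D(w^k)`. -/
def x (k : ℕ) : ENvec n d := P.xtv (A.w k)

/-- The constant `ρ = min{α̲ − α̲²δ/2, ᾱ − ᾱ²δ/2}`. -/
def ρ : ℝ := min (A.αlo - A.αlo ^ 2 * A.δ / 2) (A.αhi - A.αhi ^ 2 * A.δ / 2)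

end Algo

namespace Aux
open Pointwise
open scoped Matrix
variable {d : ℕ}

lemma exists_subgradient (f : Evec d → ℝ) (hf : ConvexOn ℝ Set.univ f) (x₀ : Evec d) :
    ∃ g, IsSubgradientAt f g x₀ := by
  classical
  have key : ∀ (a b : Evec d) (s t : ℝ), 0 ≤ s → 0 ≤ t → s + t = 1 →
      f (s • a + t • b) ≤ s * f a + t * f b := fun a b s t hs ht hst =>
    hf.2 (Set.mem_univ a) (Set.mem_univ b) hs ht hst
  set q : ℝ → Evec d → ℝ := fun t v => (f (x₀ + t • v) - f x₀) / t with hqdef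
  -- lower bound on slopes
  have hlb : ∀ (v : Evec d) (t : ℝ), 0 < t → f x₀ - f (x₀ - v) ≤ q t v := by
    intro v t ht
    have h1t : (0:ℝ) < 1 + t := by linarith
    have hcomb : (1/(1+t)) • (x₀ + t • v) + (t/(1+t)) • (x₀ - v) = x₀ := by
      match_scalars <;> field_simp <;> ring
    have h := key (x₀ + t • v) (x₀ - v) (1/(1+t)) (t/(1+t))
      (by positivity) (by positivity) (by field_simp)
    rw [hcomb] at h
    have h' : (1+t) * f x₀ ≤ f (x₀ + t • v) + t * f (x₀ - v) := by
      have h2 := mul_le_mul_of_nonneg_left h h1t.le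
      have e1 : (1+t) * (1/(1+t)) = 1 := by field_simp
      have e2 : (1+t) * (t/(1+t)) = t := by field_simp
      rw [mul_add, ← mul_assoc, ← mul_assoc, e1, e2, one_mul] at h2
      linarith
    rw [hqdef]
    rw [le_div_iff₀ ht]
    nlinarith
  -- monotonicity of slopes
  have hmono : ∀ (v : Evec d) (s t : ℝ), 0 < s → s ≤ t → q s v ≤ q t v := by
    intro v s t hs hst
    have ht : (0:ℝ) < t := lt_of_lt_of_le hs hst
    have hr0 : (0:ℝ) ≤ s/t := by positivity
    have hr1 : (0:ℝ) ≤ 1 - s/t := by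
      have : s/t ≤ 1 := by rw [div_le_one ht]; exact hst
      linarith
    have hcomb : (1 - s/t) • x₀ + (s/t) • (x₀ + t • v) = x₀ + s • v := by
      match_scalars <;> field_simp <;> ring
    have h := key x₀ (x₀ + t • v) (1 - s/t) (s/t) hr1 hr0 (by ring)
    rw [hcomb] at h
    rw [hqdef]
    rw [div_le_div_iff₀ hs ht]
    have h2 := mul_le_mul_of_nonneg_left h ht.le
    have e1 : t * (1 - s/t) = t - s := by field_simp
    have e2 : t * (s/t) = s := by field_simp
    rw [mul_add, ← mul_assoc, ← mul_assoc, e1, e2] at h2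
    nlinarith [h2]
  set S : Evec d → Set ℝ := fun v => (fun t => q t v) '' Set.Ioi 0 with hSdef
  have hSne : ∀ v, (S v).Nonempty := fun v => ⟨q 1 v, 1, Set.mem_Ioi.2 one_pos, rfl⟩
  have hSbd : ∀ v, BddBelow (S v) := by
    intro v
    refine ⟨f x₀ - f (x₀ - v), ?_⟩
    rintro y ⟨t, ht, rfl⟩
    exact hlb v t ht
  set N : Evec d → ℝ := fun v => sInf (S v) with hNdef
  have hNle : ∀ (v : Evec d) (t : ℝ), 0 < t → N v ≤ q t v := fun v t ht =>
    csInf_le (hSbd v) ⟨t, ht, rfl⟩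
  have hN0 : N 0 = 0 := by
    have hS0 : S 0 = {0} := by
      ext y
      constructor
      · rintro ⟨t, ht, rfl⟩
        simp [hqdef]
      · rintro rfl
        exact ⟨1, Set.mem_Ioi.2 one_pos, by simp [hqdef]⟩
    show sInf (S 0) = 0
    rw [hS0, csInf_singleton]
  have hNadd : ∀ u v, N (u + v) ≤ N u + N v := by
    intro u v
    refine le_of_forall_pos_le_add ?_
    intro ε hε
    obtain ⟨y₁, ⟨t₁, ht₁, rfl⟩, hy₁⟩ := exists_lt_of_csInf_lt (hSne u)
      (show N u < N u + ε/2 by linarith)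
    obtain ⟨y₂, ⟨t₂, ht₂, rfl⟩, hy₂⟩ := exists_lt_of_csInf_lt (hSne v)
      (show N v < N v + ε/2 by linarith)
    have ht₁' : 0 < t₁ := ht₁
    have ht₂' : 0 < t₂ := ht₂
    set t := min t₁ t₂ / 2 with htdef
    have ht : 0 < t := div_pos (lt_min ht₁' ht₂') two_pos
    have h2t1 : 2 * t ≤ t₁ := by
      have := min_le_left t₁ t₂; rw [htdef]; linarith
    have h2t2 : 2 * t ≤ t₂ := by
      have := min_le_right t₁ t₂; rw [htdef]; linarith
    have hmid : f (x₀ + t • (u + v)) ≤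
        (1/2) * f (x₀ + (2*t) • u) + (1/2) * f (x₀ + (2*t) • v) := by
      have hcomb : (1/2 : ℝ) • (x₀ + (2*t) • u) + (1/2 : ℝ) • (x₀ + (2*t) • v)
          = x₀ + t • (u + v) := by module
      have := key (x₀ + (2*t) • u) (x₀ + (2*t) • v) (1/2) (1/2)
        (by norm_num) (by norm_num) (by norm_num)
      rwa [hcomb] at this
    have hq : q t (u + v) ≤ q (2*t) u + q (2*t) v := by
      rw [hqdef]
      simp only
      rw [div_add_div _ _ (by positivity : (2*t) ≠ 0) (by positivity : (2*t) ≠ 0)]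
      rw [div_le_div_iff₀ ht (by positivity)]
      nlinarith [hmid]
    calc N (u + v) ≤ q t (u + v) := hNle _ t ht
      _ ≤ q (2*t) u + q (2*t) v := hq
      _ ≤ q t₁ u + q t₂ v := by
          have a1 := hmono u (2*t) t₁ (by positivity) h2t1
          have a2 := hmono v (2*t) t₂ (by positivity) h2t2
          linarith
      _ ≤ N u + N v + ε := by linarith
  have hNhom : ∀ c : ℝ, 0 < c → ∀ v, N (c • v) = c * N v := by
    intro c hc v
    have hset : S (c • v) = c • (S v) := by
      ext y
      constructor
      · rintro ⟨t, ht, rfl⟩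
        have ht' : 0 < t := ht
        refine Set.mem_smul_set.2 ⟨q (t*c) v, ⟨t*c, mul_pos ht' hc, rfl⟩, ?_⟩
        rw [hqdef]
        simp only [smul_eq_mul, smul_smul]
        rw [mul_comm t c]
        field_simp
      · intro hy
        obtain ⟨y', ⟨s, hs, rfl⟩, rfl⟩ := Set.mem_smul_set.1 hy
        have hs' : 0 < s := hs
        refine ⟨s/c, Set.mem_Ioi.2 (div_pos hs' hc), ?_⟩
        rw [hqdef]
        simp only [smul_eq_mul, smul_smul]
        rw [div_mul_cancel₀ _ (ne_of_gt hc)]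
        field_simp
    show sInf (S (c • v)) = c * sInf (S v)
    rw [hset, Real.sInf_smul_of_nonneg hc.le, smul_eq_mul]
  obtain ⟨g, -, hg⟩ := exists_extension_of_le_sublinear
    ⟨⊥, 0⟩ N hNhom hNadd
    (by
      rintro ⟨x, hx⟩
      rw [Submodule.mem_bot] at hx
      subst hx
      simp [hN0])
  set gv : Evec d := (InnerProductSpace.toDual ℝ (Evec d)).symm
    (LinearMap.toContinuousLinearMap g) with hgv
  refine ⟨gv, ?_⟩
  intro y
  have hip : ip gv (y - x₀) = g (y - x₀) := by
    rw [ip, hgv]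
    rw [InnerProductSpace.toDual_symm_apply]
    simp
  have h1 : g (y - x₀) ≤ N (y - x₀) := hg _
  have h2 : N (y - x₀) ≤ q 1 (y - x₀) := hNle _ 1 one_pos
  have h3 : q 1 (y - x₀) = f y - f x₀ := by
    rw [hqdef]; simp
  rw [hip]
  linarith


lemma seg {n d : ℕ} (P : Setup n d) (i : Fin n) {x y : Evec d} (hx : x ∈ P.X i)
    (hy : y ∈ P.X i) {t : ℝ} (ht0 : 0 < t) (ht1 : t < 1) :
    P.f i ((1-t) • x + t • y) ≤ (1-t) * P.f i x + t * P.f i y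
      - P.θ i / 2 * (t * (1-t)) * ‖y - x‖ ^ 2 := by
  obtain ⟨g, hg⟩ := exists_subgradient (P.f i) (P.hfconv i) ((1-t) • x + t • y)
  set z := (1-t) • x + t • y with hz
  have hzX : z ∈ P.X i := P.hXconv i hx hy (by linarith) ht0.le (by ring)
  have h1 := P.hstrong i z hzX x hx g hg
  have h2 := P.hstrong i z hzX y hy g hg
  have hxz : x - z = t • (x - y) := by rw [hz]; module
  have hyz : y - z = (1-t) • (y - x) := by rw [hz]; module
  have hipc : (1-t) * ip g (x - z) + t * ip g (y - z) = 0 := by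
    rw [hxz, hyz, ip, ip, real_inner_smul_right, real_inner_smul_right,
      show x - y = -(y - x) from (neg_sub y x).symm, inner_neg_right]
    ring
  have hn1 : ‖x - z‖^2 = t^2 * ‖y - x‖^2 := by
    rw [hxz, norm_smul, Real.norm_eq_abs, abs_of_pos ht0, norm_sub_rev x y]; ring
  have hn2 : ‖y - z‖^2 = (1-t)^2 * ‖y - x‖^2 := by
    rw [hyz, norm_smul, Real.norm_eq_abs, abs_of_pos (by linarith : (0:ℝ) < 1-t)]; ring
  rw [hn1] at h1
  rw [hn2] at h2
  have hθ := P.hθ i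
  nlinarith [mul_le_mul_of_nonneg_left h1 (by linarith : (0:ℝ) ≤ 1-t),
             mul_le_mul_of_nonneg_left h2 ht0.le, hipc]

lemma qg {n d : ℕ} (P : Setup n d) (i : Fin n) (w : Evec d) {y : Evec d} (hy : y ∈ P.X i) :
    ip w y - P.f i y + P.θ i / 2 * ‖y - P.xt i w‖ ^ 2 ≤ P.dconj i w := by
  have hc0 : (0:ℝ) ≤ ‖y - P.xt i w‖ ^ 2 := by positivity
  have hθ := P.hθ i
  have hxX := P.hxt_mem i w
  have step : ∀ t : ℝ, 0 < t → t < 1 →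
      ip w y - P.f i y + P.θ i / 2 * ((1-t) * ‖y - P.xt i w‖ ^ 2) ≤ P.dconj i w := by
    intro t ht0 ht1
    have hzX : (1-t) • P.xt i w + t • y ∈ P.X i :=
      P.hXconv i hxX hy (by linarith) ht0.le (by ring)
    have hmax := P.hxt_max i w _ hzX
    have hseg := seg P i hxX hy ht0 ht1
    have hipz : ip w ((1-t) • P.xt i w + t • y)
        = (1-t) * ip w (P.xt i w) + t * ip w y := by
      rw [ip, inner_add_right, real_inner_smul_right, real_inner_smul_right]; rfl
    have hdc : P.dconj i w = ip w (P.xt i w) - P.f i (P.xt i w) := rfl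
    rw [hdc]
    rw [hipz] at hmax
    have hineq : t * (ip w y - P.f i y + P.θ i / 2 * ((1-t) * ‖y - P.xt i w‖ ^ 2))
        ≤ t * (ip w (P.xt i w) - P.f i (P.xt i w)) := by
      nlinarith [hmax, hseg]
    exact le_of_mul_le_mul_left hineq ht0
  by_contra hcon
  push_neg at hcon
  have hε0 : 0 < ip w y - P.f i y + P.θ i / 2 * ‖y - P.xt i w‖ ^ 2 - P.dconj i w := by
    linarith
  set c := ‖y - P.xt i w‖ ^ 2 with hcd
  set ε := ip w y - P.f i y + P.θ i / 2 * c - P.dconj i w with hεd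
  have htc : (0:ℝ) < P.θ i * c + 1 := by positivity
  set t := min (1/2 : ℝ) (ε / (P.θ i * c + 1)) with htd
  have ht0 : 0 < t := lt_min (by norm_num) (div_pos hε0 htc)
  have ht1 : t < 1 := lt_of_le_of_lt (min_le_left _ _) (by norm_num)
  have hkey := step t ht0 ht1
  have htle : t * (P.θ i * c + 1) ≤ ε := by
    have h := min_le_right (1/2 : ℝ) (ε / (P.θ i * c + 1))
    calc t * (P.θ i * c + 1) ≤ (ε / (P.θ i * c + 1)) * (P.θ i * c + 1) :=
          mul_le_mul_of_nonneg_right h htc.le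
      _ = ε := div_mul_cancel₀ _ (ne_of_gt htc)
  have hkey' : ε ≤ P.θ i / 2 * (t * c) := by
    rw [hεd]; nlinarith [hkey]
  clear_value t ε c
  linarith [hkey', htle, ht0, hε0]

lemma smooth {n d : ℕ} (P : Setup n d) (i : Fin n) (w w' : Evec d) :
    P.dconj i w' ≤ P.dconj i w + ip (w' - w) (P.xt i w) + P.Lip i / 2 * ‖w' - w‖ ^ 2 := by
  have hθ := P.hθ i
  have hqg := qg P i w (P.hxt_mem i w')
  set x := P.xt i w with hxd
  set y := P.xt i w' with hyd
  have e1 : ip w' y = ip w y + ip (w' - w) y := by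
    rw [ip, ip, ip, inner_sub_left]; ring
  have e2 : ip (w' - w) y = ip (w' - w) x + ip (w' - w) (y - x) := by
    rw [ip, ip, ip, ← inner_add_right]
    congr 1
    abel
  have e3 : ip (w' - w) (y - x) ≤ ‖w' - w‖ * ‖y - x‖ := real_inner_le_norm _ _
  have hd' : P.dconj i w' = ip w' y - P.f i y := rfl
  have hLip : P.Lip i = 1 / P.θ i := rfl
  have hyoung : ‖w' - w‖ * ‖y - x‖ ≤ P.θ i/2 * ‖y - x‖^2 + P.Lip i/2 * ‖w' - w‖^2 := by
    rw [hLip]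
    have h := sq_nonneg (‖w' - w‖ - P.θ i * ‖y - x‖)
    have h2 : P.θ i * (‖w' - w‖ * ‖y - x‖)
        ≤ P.θ i * (P.θ i/2 * ‖y-x‖^2 + 1/P.θ i/2 * ‖w'-w‖^2) := by
      have e : P.θ i * (1/P.θ i/2 * ‖w'-w‖^2) = ‖w'-w‖^2/2 := by
        field_simp
      nlinarith [h]
    exact le_of_mul_le_mul_left h2 hθ
  rw [hd', e1, e2]
  linarith [hqg, e3, hyoung]


-- ## Matrix and block lemmas

lemma ipN_comm {n d : ℕ} (x y : ENvec n d) : ipN x y = ipN y x := by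
  rw [ipN, ipN]; exact real_inner_comm y x

lemma ipN_eq_sum {n d : ℕ} (x y : ENvec n d) :
    ipN x y = ∑ i, (inner ℝ (x i) (y i) : ℝ) := by
  rw [ipN, PiLp.inner_apply]

lemma blockMul_apply {n d : ℕ} (M : Matrix (Fin n) (Fin n) ℝ) (x : ENvec n d) (i : Fin n) :
    blockMul M x i = ∑ j, M i j • x j := rfl

lemma ipN_blockMul {n d : ℕ} (M : Matrix (Fin n) (Fin n) ℝ) (x y : ENvec n d) :
    ipN x (blockMul M y) = ∑ i, ∑ j, M i j * (inner ℝ (x i) (y j) : ℝ) := by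
  rw [ipN_eq_sum]
  refine Finset.sum_congr rfl fun i _ => ?_
  rw [blockMul_apply, inner_sum]
  exact Finset.sum_congr rfl fun j _ => real_inner_smul_right _ _ _

lemma blockMul_blockMul {n d : ℕ} (A B : Matrix (Fin n) (Fin n) ℝ) (x : ENvec n d) :
    blockMul A (blockMul B x) = blockMul (A * B) x := by
  refine PiLp.ext fun i => ?_
  show ∑ l, A i l • (∑ j, B l j • x j) = ∑ j, (A * B) i j • x j
  simp only [Finset.smul_sum, smul_smul, Matrix.mul_apply, Finset.sum_smul]
  exact Finset.sum_comm

lemma blockMul_sub {n d : ℕ} (A B : Matrix (Fin n) (Fin n) ℝ) (x : ENvec n d) :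
    blockMul (A - B) x = blockMul A x - blockMul B x := by
  refine PiLp.ext fun i => ?_
  show ∑ j, (A - B) i j • x j = (∑ j, A i j • x j) - ∑ j, B i j • x j
  rw [← Finset.sum_sub_distrib]
  exact Finset.sum_congr rfl fun j _ => by rw [Matrix.sub_apply, sub_smul]

lemma blockMul_smulM {n d : ℕ} (c : ℝ) (A : Matrix (Fin n) (Fin n) ℝ) (x : ENvec n d) :
    blockMul (c • A) x = c • blockMul A x := by
  refine PiLp.ext fun i => ?_
  show ∑ j, (c • A) i j • x j = c • ∑ j, A i j • x j
  rw [Finset.smul_sum]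
  exact Finset.sum_congr rfl fun j _ => by rw [Matrix.smul_apply, smul_eq_mul, smul_smul]

lemma ipN_blockMul_left {n d : ℕ} (M : Matrix (Fin n) (Fin n) ℝ)
    (hsym : ∀ i j, M i j = M j i) (x y : ENvec n d) :
    ipN (blockMul M x) y = ipN x (blockMul M y) := by
  rw [ipN_comm, ipN_blockMul, ipN_blockMul, Finset.sum_comm]
  refine Finset.sum_congr rfl fun i _ => Finset.sum_congr rfl fun j _ => ?_
  rw [hsym i j, real_inner_comm]

lemma quad_expand {n : ℕ} (M : Matrix (Fin n) (Fin n) ℝ) (ξ : Fin n → ℝ) :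
    dotProduct (star ξ) (M.mulVec ξ) = ∑ i, ∑ j, M i j * (ξ i * ξ j) := by
  have hstar : star ξ = ξ := funext fun i => star_trivial _
  rw [hstar, dotProduct]
  refine Finset.sum_congr rfl fun i _ => ?_
  rw [Matrix.mulVec, dotProduct, Finset.mul_sum]
  exact Finset.sum_congr rfl fun j _ => by ring

lemma psd_block {n d : ℕ} (M : Matrix (Fin n) (Fin n) ℝ) (hM : M.PosSemidef)
    (x : ENvec n d) : 0 ≤ ipN x (blockMul M x) := by
  rw [ipN_blockMul]
  have hin : ∀ i j : Fin n, (inner ℝ (x i) (x j) : ℝ) = ∑ c, x i c * x j c := by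
    intro i j
    rw [PiLp.inner_apply]
    exact Finset.sum_congr rfl fun c _ => by rw [RCLike.inner_apply', conj_trivial]
  have key : ∑ i, ∑ j, M i j * (inner ℝ (x i) (x j) : ℝ)
      = ∑ c : Fin d, dotProduct (star (fun i => x i c)) (M.mulVec (fun i => x i c)) := by
    calc ∑ i, ∑ j, M i j * (inner ℝ (x i) (x j) : ℝ)
        = ∑ i, ∑ j, ∑ c, M i j * (x i c * x j c) :=
          Finset.sum_congr rfl fun i _ => Finset.sum_congr rfl fun j _ => by
            rw [hin i j, Finset.mul_sum]
      _ = ∑ i, ∑ c, ∑ j, M i j * (x i c * x j c) :=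
          Finset.sum_congr rfl fun i _ => Finset.sum_comm
      _ = ∑ c, ∑ i, ∑ j, M i j * (x i c * x j c) := Finset.sum_comm
      _ = ∑ c : Fin d, dotProduct (star (fun i => x i c)) (M.mulVec (fun i => x i c)) :=
          Finset.sum_congr rfl fun c _ => (quad_expand M _).symm
  rw [key]
  exact Finset.sum_nonneg fun c _ => hM.dotProduct_mulVec_nonneg _

-- ## Graph Laplacian lemmas

def cw {n : ℕ} (Gs : GraphSeq n) (k : ℕ) (i j : Fin n) : ℝ :=
  if Gs.adj k i j = true then Gs.h k i j else 0

lemma cw_symm {n : ℕ} (Gs : GraphSeq n) (k : ℕ) (i j : Fin n) :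
    cw Gs k i j = cw Gs k j i := by
  rw [cw, cw, Gs.adj_symm, Gs.h_symm]

lemma cw_nonneg {n : ℕ} (Gs : GraphSeq n) (k : ℕ) (i j : Fin n) : 0 ≤ cw Gs k i j := by
  rw [cw]
  split
  · exact le_trans Gs.hlow_pos.le (Gs.h_mem k i j (by assumption)).1
  · exact le_refl 0
lemma cw_diag {n : ℕ} (Gs : GraphSeq n) (k : ℕ) (i : Fin n) : cw Gs k i i = 0 := by
  rw [cw, Gs.adj_irrefl]
  simp

lemma H_eq {n : ℕ} (Gs : GraphSeq n) (k : ℕ) (i j : Fin n) :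
    Gs.H k i j = (if i = j then ∑ l, cw Gs k i l else 0) - cw Gs k i j := by
  by_cases h : i = j
  · subst h
    simp only [GraphSeq.H, Matrix.of_apply, if_pos rfl, cw_diag, sub_zero]
    exact Finset.sum_congr rfl fun l _ => rfl
  · simp only [GraphSeq.H, Matrix.of_apply, if_neg h, cw, zero_sub]
    split <;> simp

lemma H_symm' {n : ℕ} (Gs : GraphSeq n) (k : ℕ) (i j : Fin n) :
    Gs.H k i j = Gs.H k j i := by
  by_cases h : i = j
  · subst h; rfl
  · simp only [GraphSeq.H, Matrix.of_apply, if_neg h, if_neg (Ne.symm h)]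
    rw [Gs.adj_symm, Gs.h_symm]

lemma lap_quad {n : ℕ} (Gs : GraphSeq n) (k : ℕ) (B : Fin n → Fin n → ℝ)
    (hB : ∀ i j, B i j = B j i) :
    ∑ i, ∑ j, Gs.H k i j * B i j
      = 1/2 * ∑ i, ∑ j, cw Gs k i j * (B i i + B j j - 2 * B i j) := by
  have row : ∀ i, ∑ j, Gs.H k i j * B i j = ∑ j, cw Gs k i j * (B i i - B i j) := by
    intro i
    have e : ∀ j : Fin n, Gs.H k i j * B i j
        = (if j = i then (∑ l, cw Gs k i l) * B i i else 0) - cw Gs k i j * B i j := by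
      intro j
      rw [H_eq]
      by_cases h : i = j
      · subst h; rw [if_pos rfl, if_pos rfl]; ring
      · rw [if_neg h, if_neg (Ne.symm h)]; ring
    rw [Finset.sum_congr rfl fun j _ => e j, Finset.sum_sub_distrib,
      Finset.sum_ite_eq' Finset.univ i (fun _ => (∑ l, cw Gs k i l) * B i i),
      if_pos (Finset.mem_univ i)]
    rw [Finset.sum_mul]
    rw [← Finset.sum_sub_distrib]
    exact Finset.sum_congr rfl fun j _ => by ring
  have h2 : ∑ i, ∑ j, cw Gs k i j * (B i i - B i j)
      = ∑ i, ∑ j, cw Gs k i j * (B j j - B i j) := by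
    rw [Finset.sum_comm]
    refine Finset.sum_congr rfl fun i _ => Finset.sum_congr rfl fun j _ => ?_
    rw [show cw Gs k j i = cw Gs k i j from (cw_symm Gs k i j).symm, hB j i]
  have h3 : ∑ i, ∑ j, cw Gs k i j * (B i i + B j j - 2 * B i j)
      = (∑ i, ∑ j, cw Gs k i j * (B i i - B i j))
        + ∑ i, ∑ j, cw Gs k i j * (B j j - B i j) := by
    rw [← Finset.sum_add_distrib]
    refine Finset.sum_congr rfl fun i _ => ?_
    rw [← Finset.sum_add_distrib]
    exact Finset.sum_congr rfl fun j _ => by ring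
  rw [Finset.sum_congr rfl fun i _ => row i]
  rw [h3, ← h2]
  ring

lemma H_psd {n : ℕ} (Gs : GraphSeq n) (k : ℕ) : (Gs.H k).PosSemidef := by
  refine Matrix.PosSemidef.of_dotProduct_mulVec_nonneg ?_ ?_
  · ext i j
    rw [Matrix.conjTranspose_apply, star_trivial]
    exact (H_symm' Gs k j i)
  · intro ξ
    rw [quad_expand, lap_quad Gs k (fun i j => ξ i * ξ j) (fun i j => mul_comm _ _)]
    have : ∀ i j : Fin n, cw Gs k i j * (ξ i * ξ i + ξ j * ξ j - 2 * (ξ i * ξ j))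
        = cw Gs k i j * (ξ i - ξ j)^2 := fun i j => by ring
    rw [Finset.sum_congr rfl fun i _ => Finset.sum_congr rfl fun j _ => this i j]
    have : (0:ℝ) ≤ ∑ i, ∑ j, cw Gs k i j * (ξ i - ξ j)^2 :=
      Finset.sum_nonneg fun i _ => Finset.sum_nonneg fun j _ =>
        mul_nonneg (cw_nonneg Gs k i j) (sq_nonneg _)
    linarith

lemma lap_vec {n d : ℕ} (Gs : GraphSeq n) (k : ℕ) (x : ENvec n d) :
    ipN x (blockMul (Gs.H k) x) = 1/2 * ∑ i, ∑ j, cw Gs k i j * ‖x i - x j‖^2 := by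
  rw [ipN_blockMul,
    lap_quad Gs k (fun i j => (inner ℝ (x i) (x j) : ℝ)) (fun i j => real_inner_comm _ _)]
  congr 1
  refine Finset.sum_congr rfl fun i _ => Finset.sum_congr rfl fun j _ => ?_
  congr 1
  rw [@norm_sub_sq_real, real_inner_self_eq_norm_sq, real_inner_self_eq_norm_sq]
  ring

lemma edge_bound {n d : ℕ} (Gs : GraphSeq n) (k : ℕ) (x : ENvec n d) {i j : Fin n}
    (hadj : Gs.adj k i j = true) :
    Gs.hlow * ‖x i - x j‖^2 ≤ ipN x (blockMul (Gs.H k) x) := by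
  have hij : i ≠ j := by
    intro h
    rw [h, Gs.adj_irrefl] at hadj
    exact Bool.false_ne_true hadj
  rw [lap_vec]
  set F : Fin n → ℝ := fun i' => ∑ j', cw Gs k i' j' * ‖x i' - x j'‖^2 with hF
  have hFnn : ∀ i', 0 ≤ F i' := fun i' =>
    Finset.sum_nonneg fun j' _ => mul_nonneg (cw_nonneg Gs k i' j') (sq_nonneg _)
  have htnn : ∀ i' j', 0 ≤ cw Gs k i' j' * ‖x i' - x j'‖^2 :=
    fun i' j' => mul_nonneg (cw_nonneg Gs k i' j') (sq_nonneg _)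
  have h1 : cw Gs k i j * ‖x i - x j‖^2 ≤ F i :=
    Finset.single_le_sum (fun j' _ => htnn i j') (Finset.mem_univ j)
  have h2 : cw Gs k j i * ‖x j - x i‖^2 ≤ F j :=
    Finset.single_le_sum (fun j' _ => htnn j j') (Finset.mem_univ i)
  have h3 : F i + F j ≤ ∑ i', F i' := by
    rw [← Finset.sum_pair hij]
    exact Finset.sum_le_sum_of_subset_of_nonneg (Finset.subset_univ _)
      (fun i' _ _ => hFnn i')
  have hcl : Gs.hlow ≤ cw Gs k i j := by
    rw [cw, if_pos hadj]
    exact (Gs.h_mem k i j hadj).1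
  have h4 : Gs.hlow * ‖x i - x j‖^2 ≤ cw Gs k i j * ‖x i - x j‖^2 :=
    mul_le_mul_of_nonneg_right hcl (sq_nonneg _)
  have h5 : cw Gs k j i * ‖x j - x i‖^2 = cw Gs k i j * ‖x i - x j‖^2 := by
    rw [show cw Gs k j i = cw Gs k i j from (cw_symm Gs k i j).symm, norm_sub_rev]
  linarith

lemma colsum {n : ℕ} (Gs : GraphSeq n) (k : ℕ) (j : Fin n) :
    ∑ i, Gs.H k i j = 0 := by
  rw [Finset.sum_congr rfl fun i _ => H_eq Gs k i j]
  rw [Finset.sum_sub_distrib]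
  rw [Finset.sum_ite_eq' Finset.univ j (fun i => ∑ l, cw Gs k i l),
    if_pos (Finset.mem_univ j)]
  rw [show ∑ i, cw Gs k i j = ∑ i, cw Gs k j i from
    Finset.sum_congr rfl fun i _ => cw_symm Gs k i j]
  ring

lemma blockMul_mem_sperp {n d : ℕ} (Gs : GraphSeq n) (k : ℕ) (u : ENvec n d) :
    blockMul (Gs.H k) u ∈ Sperp n d := by
  show ∑ i, blockMul (Gs.H k) u i = 0
  calc ∑ i, blockMul (Gs.H k) u i = ∑ i, ∑ j, Gs.H k i j • u j := rfl
    _ = ∑ j, ∑ i, Gs.H k i j • u j := Finset.sum_comm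
    _ = ∑ j : Fin n, (∑ i, Gs.H k i j) • u j :=
        Finset.sum_congr rfl fun j _ => (Finset.sum_smul).symm
    _ = ∑ j : Fin n, (0:ℝ) • u j := by
        refine Finset.sum_congr rfl fun j _ => ?_
        rw [colsum Gs k j]
    _ = 0 := by simp

open scoped MatrixOrder in
set_option maxHeartbeats 1000000 in
lemma key_psd {n : ℕ} (L : Fin n → ℝ) (hL : ∀ i, 0 < L i) (H : Matrix (Fin n) (Fin n) ℝ)
    (hH : H.PosSemidef) (δ : ℝ)
    (hδ : (δ • Matrix.diagonal (fun i => (L i)⁻¹) - H).PosSemidef) :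
    (δ • H - H * Matrix.diagonal L * H).PosSemidef := by
  set s : Fin n → ℝ := fun i => Real.sqrt (L i) with hs
  have hs0 : ∀ i, 0 < s i := fun i => Real.sqrt_pos.2 (hL i)
  set Sh : Matrix (Fin n) (Fin n) ℝ := Matrix.diagonal s with hShd
  set Shi : Matrix (Fin n) (Fin n) ℝ := Matrix.diagonal (fun i => (s i)⁻¹) with hShid
  have hShH : Shᴴ = Sh := by
    rw [hShd, Matrix.diagonal_conjTranspose,
      show star s = s from funext fun i => star_trivial _]
  have hShiH : Shiᴴ = Shi := by
    rw [hShid, Matrix.diagonal_conjTranspose,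
      show star (fun i => (s i)⁻¹) = fun i => (s i)⁻¹ from funext fun i => star_trivial _]
  have hss : Sh * Sh = Matrix.diagonal L := by
    rw [hShd, Matrix.diagonal_mul_diagonal]
    exact congrArg Matrix.diagonal (funext fun i => Real.mul_self_sqrt (hL i).le)
  have hinv : Shi * Sh = 1 := by
    rw [hShid, hShd, Matrix.diagonal_mul_diagonal, ← Matrix.diagonal_one]
    exact congrArg Matrix.diagonal (funext fun i => inv_mul_cancel₀ (ne_of_gt (hs0 i)))
  have hinv' : Sh * Shi = 1 := by
    rw [hShid, hShd, Matrix.diagonal_mul_diagonal, ← Matrix.diagonal_one]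
    exact congrArg Matrix.diagonal (funext fun i => mul_inv_cancel₀ (ne_of_gt (hs0 i)))
  have hSdinv : Sh * (Matrix.diagonal fun i => (L i)⁻¹) * Sh = 1 := by
    rw [hShd, Matrix.diagonal_mul_diagonal, Matrix.diagonal_mul_diagonal,
      ← Matrix.diagonal_one]
    refine congrArg Matrix.diagonal (funext fun i => ?_)
    rw [show s i * (L i)⁻¹ * s i = (s i * s i) * (L i)⁻¹ from by ring,
      Real.mul_self_sqrt (hL i).le, mul_inv_cancel₀ (ne_of_gt (hL i))]
  set N : Matrix (Fin n) (Fin n) ℝ := Sh * H * Sh with hNd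
  have hNpsd : N.PosSemidef := by
    have h := hH.mul_mul_conjTranspose_same Sh
    rwa [hShH] at h
  have h1 : (δ • (1 : Matrix (Fin n) (Fin n) ℝ) - N).PosSemidef := by
    have h := hδ.mul_mul_conjTranspose_same Sh
    rw [hShH] at h
    have e : Sh * (δ • Matrix.diagonal (fun i => (L i)⁻¹) - H) * Sh
        = δ • (1 : Matrix (Fin n) (Fin n) ℝ) - N := by
      rw [Matrix.mul_sub, Matrix.sub_mul, Matrix.mul_smul, Matrix.smul_mul, hSdinv, hNd]
    rwa [e] at h
  set Sq := CFC.sqrt N with hSqd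
  have hSq : Sq * Sq = N := CFC.sqrt_mul_sqrt_self N (Matrix.nonneg_iff_posSemidef.2 hNpsd)
  have hSqH : Sqᴴ = Sq := (CFC.sqrt_nonneg N).isSelfAdjoint
  have h2 : (Sq * (δ • (1 : Matrix (Fin n) (Fin n) ℝ) - N) * Sq).PosSemidef := by
    have h := h1.mul_mul_conjTranspose_same Sq
    rwa [hSqH] at h
  have e2 : Sq * N * Sq = N * N := by
    rw [← hSq]
    simp only [Matrix.mul_assoc]
  have h3 : Sq * (δ • (1 : Matrix (Fin n) (Fin n) ℝ) - N) * Sq = δ • N - N * N := by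
    rw [Matrix.mul_sub, Matrix.sub_mul, Matrix.mul_smul, Matrix.mul_one, Matrix.smul_mul,
      hSq, e2]
  rw [h3] at h2
  have h4 : (Shi * (δ • N - N * N) * Shi).PosSemidef := by
    have h := h2.mul_mul_conjTranspose_same Shi
    rwa [hShiH] at h
  have h5 : Shi * (δ • N - N * N) * Shi = δ • H - H * Matrix.diagonal L * H := by
    rw [Matrix.mul_sub, Matrix.sub_mul, Matrix.mul_smul, Matrix.smul_mul]
    congr 1
    · congr 1
      rw [hNd]
      calc Shi * (Sh * H * Sh) * Shi = Shi * Sh * H * (Sh * Shi) := by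
            simp only [Matrix.mul_assoc]
        _ = H := by rw [hinv, hinv', Matrix.one_mul, Matrix.mul_one]
    · rw [hNd]
      calc Shi * (Sh * H * Sh * (Sh * H * Sh)) * Shi
          = Shi * Sh * (H * (Sh * Sh) * H) * (Sh * Shi) := by
            simp only [Matrix.mul_assoc]
        _ = H * Matrix.diagonal L * H := by
            rw [hinv, hinv', hss, Matrix.one_mul, Matrix.mul_one,
              Matrix.mul_assoc]
  rwa [h5] at h4


-- ## Descent and step-size lemmas

lemma lip_pos {n d : ℕ} (P : Setup n d) (i : Fin n) : 0 < P.Lip i :=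
  div_pos one_pos (P.hθ i)

lemma blockMul_diag {n d : ℕ} (v : Fin n → ℝ) (u : ENvec n d) (i : Fin n) :
    blockMul (Matrix.diagonal v) u i = v i • u i := by
  rw [blockMul_apply]
  simp [Matrix.diagonal_apply, ite_smul]

lemma descent {n d : ℕ} (P : Setup n d) (Gs : GraphSeq n) (A : Algo n d P Gs) (k : ℕ) :
    P.D (A.w (k+1)) + (A.α k - (A.α k)^2 * A.δ / 2)
      * ipN (A.x k) (blockMul (Gs.H k) (A.x k)) ≤ P.D (A.w k) := by
  have hα0 : 0 < A.α k := lt_of_lt_of_le A.hαlo (A.hα k).1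
  set w := A.w k with hwd
  set x := A.x k with hxd
  set α := A.α k with hαd
  set u := blockMul (Gs.H k) x with hud
  set q : ℝ := ipN x u with hqd
  have hwrec : A.w (k+1) = w - α • u := A.hrec k
  -- componentwise difference
  have hvi : ∀ i : Fin n, (w - α • u) i - w i = (-α) • u i := by
    intro i
    show w i - (α • u) i - w i = (-α) • u i
    show w i - α • u i - w i = (-α) • u i
    module
  have hxi : ∀ i : Fin n, P.xt i (w i) = x i := fun i => rfl
  -- smoothness summed
  have hsmooth : P.D (w - α • u) ≤ P.D w + ∑ i, ip ((-α) • u i) (x i)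
      + ∑ i, P.Lip i / 2 * ‖(-α) • u i‖^2 := by
    rw [Setup.D, Setup.D, ← Finset.sum_add_distrib, ← Finset.sum_add_distrib]
    refine Finset.sum_le_sum fun i _ => ?_
    have h := smooth P i (w i) ((w - α • u) i)
    rw [hvi i, hxi i] at h
    exact h
  -- first order term
  have hfo : ∑ i, ip ((-α) • u i) (x i) = -α * q := by
    rw [hqd, ipN_comm, ipN_eq_sum, Finset.mul_sum]
    refine Finset.sum_congr rfl fun i _ => ?_
    rw [ip, real_inner_smul_left]
  -- second order term
  have hso : ∑ i, P.Lip i / 2 * ‖(-α) • u i‖^2 = α^2/2 * ∑ i, P.Lip i * ‖u i‖^2 := by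
    rw [Finset.mul_sum]
    refine Finset.sum_congr rfl fun i _ => ?_
    rw [norm_smul, Real.norm_eq_abs, mul_pow, sq_abs]
    ring
  -- identify the quadratic form
  have hquad : ∑ i, P.Lip i * ‖u i‖^2
      = ipN x (blockMul (Gs.H k * Matrix.diagonal P.Lip * Gs.H k) x) := by
    have e1 : ∑ i, P.Lip i * ‖u i‖^2 = ipN u (blockMul (Matrix.diagonal P.Lip) u) := by
      rw [ipN_eq_sum]
      refine Finset.sum_congr rfl fun i _ => ?_
      rw [blockMul_diag, real_inner_smul_right, real_inner_self_eq_norm_sq]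
    rw [e1, hud, ipN_blockMul_left (Gs.H k) (fun i j => (H_symm' Gs k i j)) x,
      blockMul_blockMul, blockMul_blockMul]
  -- the matrix inequality
  have hkey : ipN x (blockMul (Gs.H k * Matrix.diagonal P.Lip * Gs.H k) x) ≤ A.δ * q := by
    have hpsd := key_psd P.Lip (lip_pos P) (Gs.H k) (H_psd Gs k) A.δ (A.hδ k)
    have h0 := psd_block _ hpsd x
    rw [blockMul_sub, blockMul_smulM] at h0
    rw [ipN, inner_sub_right] at h0
    have e : (inner ℝ x (A.δ • blockMul (Gs.H k) x) : ℝ) = A.δ * q := by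
      rw [real_inner_smul_right, hqd, hud, ipN]
    rw [e] at h0
    have e2 : (inner ℝ x (blockMul (Gs.H k * Matrix.diagonal P.Lip * Gs.H k) x) : ℝ)
        = ipN x (blockMul (Gs.H k * Matrix.diagonal P.Lip * Gs.H k) x) := rfl
    linarith [h0, e2.symm.le, e2.le]
  have hq0 : 0 ≤ q := psd_block _ (H_psd Gs k) x
  rw [hwrec]
  have final := hsmooth
  rw [hfo, hso] at final
  nlinarith [final, hkey, hq0, sq_nonneg α]

lemma rho_le {n d : ℕ} {P : Setup n d} {Gs : GraphSeq n} (A : Algo n d P Gs) (k : ℕ) :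
    A.ρ ≤ A.α k - (A.α k)^2 * A.δ / 2 := by
  obtain ⟨h1, h2⟩ := A.hα k
  have hδ := A.hδ_pos
  rw [Algo.ρ]
  by_cases h : A.δ * (A.α k + A.αlo) ≤ 2
  · refine le_trans (min_le_left _ _) ?_
    nlinarith
  · push_neg at h
    refine le_trans (min_le_right _ _) ?_
    nlinarith [mul_le_mul_of_nonneg_left h2 hδ.le]

lemma rho_pos {n d : ℕ} {P : Setup n d} {Gs : GraphSeq n} (A : Algo n d P Gs) :
    0 < A.ρ := by
  obtain ⟨h1, h2⟩ := A.hα 0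
  have ha : 0 < A.αlo := A.hαlo
  have hb : A.αlo ≤ A.αhi := le_trans h1 h2
  have hδ := A.hδ_pos
  have hbδ : A.αhi * A.δ < 2 := by
    have := A.hαhi
    rw [lt_div_iff₀ hδ] at this
    exact this
  have haδ : A.αlo * A.δ < 2 := by nlinarith
  rw [Algo.ρ]
  apply lt_min <;> nlinarith

end Aux

theorem stmt8 {n d : ℕ} (P : Setup n d) (Gs : GraphSeq n) (A : Algo n d P Gs) :
    Summable (fun k => ipN (A.x k) (blockMul (Gs.H k) (A.x k))) ∧
    (∑' k : ℕ, ipN (A.x k) (blockMul (Gs.H k) (A.x k))) ≤ (P.D (A.w 0) - P.Dstar) / A.ρ ∧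
    Filter.Tendsto
      (fun k => ⨆ e : {e : Fin n × Fin n // Gs.adj k e.1 e.2 = true},
        ‖A.x k e.1.1 - A.x k e.1.2‖)
      Filter.atTop (nhds 0) := by
  classical
  set q : ℕ → ℝ := fun k => ipN (A.x k) (blockMul (Gs.H k) (A.x k)) with hqd
  have hq0 : ∀ k, 0 ≤ q k := fun k => Aux.psd_block _ (Aux.H_psd Gs k) _
  have hρpos : 0 < A.ρ := Aux.rho_pos A
  -- all iterates are in S^⊥
  have hwS : ∀ k, A.w k ∈ Sperp n d := by
    intro k
    induction k with
    | zero => exact A.hw0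
    | succ k ih =>
        rw [A.hrec k]
        exact Submodule.sub_mem _ ih
          (Submodule.smul_mem _ _ (Aux.blockMul_mem_sperp Gs k _))
  -- lower bound on the dual function over S^⊥
  have hDlb : ∀ y ∈ P.D '' (Sperp n d : Set (ENvec n d)), -P.Fstar ≤ y := by
    rintro y ⟨w, hw, rfl⟩
    have hw' : ∑ i, w i = 0 := hw
    have hterm : ∀ i : Fin n, ip (w i) P.xstar - P.f i P.xstar ≤ P.dconj i (w i) :=
      fun i => P.hxt_max i (w i) P.xstar (Set.mem_iInter.1 P.hxstar_mem i)
    have hsum : ∑ i, (ip (w i) P.xstar - P.f i P.xstar) ≤ P.D w := by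
      rw [Setup.D]
      exact Finset.sum_le_sum fun i _ => hterm i
    have hzero : ∑ i, ip (w i) P.xstar = 0 := by
      have h1 : ∑ i, (inner ℝ (w i) P.xstar : ℝ) = (inner ℝ (∑ i, w i) P.xstar : ℝ) :=
        (sum_inner Finset.univ (fun i => w i) P.xstar).symm
      rw [show ∑ i, ip (w i) P.xstar = ∑ i, (inner ℝ (w i) P.xstar : ℝ) from rfl, h1,
        hw', inner_zero_left]
    rw [Finset.sum_sub_distrib, hzero, zero_sub] at hsum
    rw [Setup.Fstar]
    linarith
  have hDbdd : BddBelow (P.D '' (Sperp n d : Set (ENvec n d))) := ⟨-P.Fstar, hDlb⟩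
  have hDstar_le : ∀ k, P.Dstar ≤ P.D (A.w k) := fun k =>
    csInf_le hDbdd ⟨A.w k, hwS k, rfl⟩
  -- partial sums
  have hkey : ∀ N : ℕ, P.D (A.w N) + ∑ k ∈ Finset.range N, A.ρ * q k ≤ P.D (A.w 0) := by
    intro N
    induction N with
    | zero => simp
    | succ N ih =>
        rw [Finset.sum_range_succ]
        have hd := Aux.descent P Gs A N
        have hρ := Aux.rho_le A N
        have h2 : A.ρ * q N ≤ (A.α N - (A.α N)^2 * A.δ / 2) * q N :=
          mul_le_mul_of_nonneg_right hρ (hq0 N)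
        have h3 : (A.α N - (A.α N)^2 * A.δ / 2) * q N
            = (A.α N - (A.α N)^2 * A.δ / 2) * ipN (A.x N) (blockMul (Gs.H N) (A.x N)) := rfl
        linarith
  have hpart : ∀ N : ℕ, ∑ k ∈ Finset.range N, q k ≤ (P.D (A.w 0) - P.Dstar) / A.ρ := by
    intro N
    rw [le_div_iff₀ hρpos]
    have h1 := hkey N
    have h2 := hDstar_le N
    have e : (∑ k ∈ Finset.range N, q k) * A.ρ = ∑ k ∈ Finset.range N, A.ρ * q k := by
      rw [Finset.sum_mul]
      exact Finset.sum_congr rfl fun k _ => mul_comm _ _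
    rw [e]
    linarith
  have hsum : Summable q := summable_of_sum_range_le hq0 hpart
  have htsum : ∑' k, q k ≤ (P.D (A.w 0) - P.Dstar) / A.ρ :=
    Real.tsum_le_of_sum_range_le hq0 hpart
  refine ⟨hsum, htsum, ?_⟩
  -- the sup over edges tends to zero
  have hq_tend : Filter.Tendsto q Filter.atTop (nhds 0) := hsum.tendsto_atTop_zero
  have hne : ∀ k, Nonempty {e : Fin n × Fin n // Gs.adj k e.1 e.2 = true} := by
    intro k
    obtain ⟨i, j, hij⟩ := Gs.adj_ne k
    exact ⟨⟨(i, j), hij⟩⟩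
  apply squeeze_zero (g := fun k => Real.sqrt (q k / Gs.hlow))
  · intro k
    haveI := hne k
    have e := Classical.arbitrary {e : Fin n × Fin n // Gs.adj k e.1 e.2 = true}
    exact le_ciSup_of_le (Set.Finite.bddAbove (Set.finite_range _)) e (norm_nonneg _)
  · intro k
    haveI := hne k
    refine ciSup_le fun e => ?_
    have hb := Aux.edge_bound Gs k (A.x k) e.2
    rw [show ‖A.x k e.1.1 - A.x k e.1.2‖
        = Real.sqrt (‖A.x k e.1.1 - A.x k e.1.2‖^2) from (Real.sqrt_sq (norm_nonneg _)).symm]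
    apply Real.sqrt_le_sqrt
    rw [le_div_iff₀ Gs.hlow_pos]
    calc ‖A.x k e.1.1 - A.x k e.1.2‖^2 * Gs.hlow
        = Gs.hlow * ‖A.x k e.1.1 - A.x k e.1.2‖^2 := mul_comm _ _
      _ ≤ q k := hb
  · have h1 : Filter.Tendsto (fun k => q k / Gs.hlow) Filter.atTop (nhds 0) := by
      simpa using hq_tend.div_const Gs.hlow
    have h2 := (Real.continuous_sqrt.tendsto 0).comp h1
    simpa [Function.comp_def] using h2
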